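/- For any proper convex lsc Lagrangian L on X × X*, the set-valued map x ↦ δL(x) = {p : (p,x) ∈ ∂L(x,p)} is monotone: if p ∈ δL(x) and q ∈ δL(y) then ⟨p − q, x − y⟩ ≥ 0. -/

import Mathlib

open NormedSpace

/-- For a proper convex lsc Lagrangian `L` on `X × X*`, the
set-valued map `x ↦ δL(x) = {p : (p,x) ∈ ∂L(x,p)}` is monotone. -/
theorem stmt3 {X : Type*} [NormedAddCommGroup X] [NormedSpace ℝ X] [CompleteSpace X]
    (hrefl : Function.Surjective (NormedSpace.inclusionInDoubleDual ℝ X))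
    (L : X × StrongDual ℝ X → EReal)
    (hproper : (∃ z, L z ≠ ⊤) ∧ ∀ z, L z ≠ ⊥)
    (hconv : ∀ a b : X × StrongDual ℝ X, ∀ t : ℝ, 0 ≤ t → t ≤ 1 →
      L (t • a + (1 - t) • b) ≤ (t : EReal) * L a + ((1 - t : ℝ) : EReal) * L b)
    (hlsc : LowerSemicontinuous L)
    (x y : X) (p q : StrongDual ℝ X)
    (hx : ∀ z r, L (x, p) + ((p (z - x) + (r - p) x : ℝ) : EReal) ≤ L (z, r))
    (hy : ∀ z r, L (y, q) + ((q (z - y) + (r - q) y : ℝ) : EReal) ≤ L (z, r)) :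
    0 ≤ (p - q) (x - y) := by
  obtain ⟨⟨z0, hz0⟩, hbot⟩ := hproper
  have hax : L (x, p) ≠ ⊤ := by
    intro h
    have h0 := hx z0.1 z0.2
    rw [Prod.mk.eta, h, EReal.top_add_coe] at h0
    exact hz0 (top_le_iff.mp h0)
  have hay : L (y, q) ≠ ⊤ := by
    intro h
    have h0 := hy z0.1 z0.2
    rw [Prod.mk.eta, h, EReal.top_add_coe] at h0
    exact hz0 (top_le_iff.mp h0)
  have ha : L (x, p) = ((L (x, p)).toReal : EReal) := (EReal.coe_toReal hax (hbot _)).symm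
  have hb : L (y, q) = ((L (y, q)).toReal : EReal) := (EReal.coe_toReal hay (hbot _)).symm
  have h1 := hx y q
  have h2 := hy x p
  rw [ha, hb, ← EReal.coe_add] at h1 h2
  have h1' := EReal.coe_le_coe_iff.mp h1
  have h2' := EReal.coe_le_coe_iff.mp h2
  simp only [map_sub, ContinuousLinearMap.sub_apply] at h1' h2' ⊢
  linarith
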